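/- Let B(p,q,r) denote any one of the three terms of the Borcherds identity in a vertex algebra (or for three fixed vectors a,b,c with the products satisfying (B0)). Then the recursion B(p+1,q,r) = B(p,q+1,r) + B(p,q,r+1) holds for each term separately. Consequently, if the Borcherds identity holds for all p,q ∈ ℤ with r = 0 (the commutator formula) and for all q,r ∈ ℤ with p = 0 (the associativity formula), then it holds for all p,q,r ∈ ℤ. -/

import Mathlib

/-- Generalized binomial coefficient `C(n,i)` for `n : ℤ`, `i : ℕ`. -/
def ichoose (n : ℤ) (i : ℕ) : ℤ :=
  if 0 ≤ n then (n.toNat.choose i : ℤ)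
  else (-1) ^ i * ((((i : ℤ) - 1 - n).toNat.choose i : ℤ))

/-- `(-1)^m` for an integer `m`. -/
def msign (m : ℤ) : ℤ := if Even m then 1 else -1

lemma ichoose_zero (n : ℤ) : ichoose n 0 = 1 := by
  unfold ichoose; split_ifs <;> simp

lemma msign_succ (r : ℤ) : msign (r + 1) = -msign r := by
  unfold msign
  by_cases h : Even r
  · rw [if_pos h, if_neg (by simp [Int.even_add_one, h])]
  · rw [if_neg h, if_pos (by simp [Int.even_add_one, h]; exact Int.not_even_iff_odd.mp h)]; norm_num

lemma ichoose_succ (n : ℤ) (i : ℕ) :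
    ichoose (n + 1) (i + 1) = ichoose n (i + 1) + ichoose n i := by
  unfold ichoose
  by_cases h : 0 ≤ n
  · rw [if_pos h, if_pos h, if_pos (by omega)]
    have h1 : (n + 1).toNat = n.toNat + 1 := by omega
    rw [h1, Nat.choose_succ_succ]
    push_cast; ring
  · rw [if_neg h, if_neg h]
    by_cases h1 : 0 ≤ n + 1
    · have hn : n = -1 := by omega
      subst hn
      rw [if_pos h1]
      push_cast
      have e1 : ((i : ℤ) + 1 - 1 - -1).toNat = i + 1 := by omega
      have e2 : ((i : ℤ) - 1 - -1).toNat = i := by omega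
      rw [e1, e2]
      simp [Nat.choose_succ_self_right, pow_succ]
    · rw [if_neg h1]
      push_cast
      have e1 : ((i : ℤ) + 1 - 1 - (n + 1)).toNat = ((i : ℤ) - 1 - n).toNat := by omega
      have e2 : ((i : ℤ) + 1 - 1 - n).toNat = ((i : ℤ) - 1 - n).toNat + 1 := by omega
      rw [e1, e2, Nat.choose_succ_succ ((i : ℤ) - 1 - n).toNat i]
      push_cast
      ring

lemma borcherds_abstract {V : Type*} [AddCommGroup V] (T : ℤ → ℤ → V) (n₀ : ℤ)
    (hT : ∀ m n : ℤ, n₀ ≤ n → T m n = 0) (c1 c2 c3 : ℕ → ℤ)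
    (h0 : c1 0 = c2 0) (hrec : ∀ i : ℕ, c1 (i + 1) = c2 (i + 1) + c3 i) (u v : ℤ) :
    ∑ᶠ i : ℕ, c1 i • T (u + 1 - i) (v + i)
      = (∑ᶠ i : ℕ, c2 i • T (u + 1 - i) (v + i))
        + ∑ᶠ i : ℕ, c3 i • T (u - i) (v + 1 + i) := by
  set N := (n₀ - v).toNat with hN
  have hv : ∀ i : ℕ, N ≤ i → n₀ ≤ v + i := by intro i hi; omega
  have sup : ∀ (f : ℕ → V), (∀ i, N + 1 ≤ i → f i = 0) →
      Function.support f ⊆ (Finset.range (N + 1) : Finset ℕ) := by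
    intro f hf
    apply Function.support_subset_iff'.2
    intro i hi
    exact hf i (by simpa using hi)
  have e1 : ∑ᶠ i : ℕ, c1 i • T (u + 1 - i) (v + i)
      = ∑ i ∈ Finset.range (N + 1), c1 i • T (u + 1 - i) (v + i) :=
    finsum_eq_sum_of_support_subset _ (sup _ fun i hi => by
      rw [hT _ _ (hv i (by omega)), smul_zero])
  have e2 : ∑ᶠ i : ℕ, c2 i • T (u + 1 - i) (v + i)
      = ∑ i ∈ Finset.range (N + 1), c2 i • T (u + 1 - i) (v + i) :=
    finsum_eq_sum_of_support_subset _ (sup _ fun i hi => by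
      rw [hT _ _ (hv i (by omega)), smul_zero])
  have e3 : ∑ᶠ i : ℕ, c3 i • T (u - i) (v + 1 + i)
      = ∑ i ∈ Finset.range (N + 1), c3 i • T (u - i) (v + 1 + i) :=
    finsum_eq_sum_of_support_subset _ (sup _ fun i hi => by
      rw [hT _ _ (by omega : n₀ ≤ v + 1 + (i : ℤ)), smul_zero])
  rw [e1, e2, e3]
  rw [Finset.sum_range_succ' (fun i => c1 i • T (u + 1 - i) (v + i)) N,
      Finset.sum_range_succ' (fun i => c2 i • T (u + 1 - i) (v + i)) N,
      Finset.sum_range_succ (fun i => c3 i • T (u - i) (v + 1 + i)) N]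
  have key : ∀ i : ℕ, c1 (i + 1) • T (u + 1 - ((i : ℤ) + 1)) (v + ((i : ℤ) + 1))
      = c2 (i + 1) • T (u + 1 - ((i : ℤ) + 1)) (v + ((i : ℤ) + 1))
        + c3 i • T (u - i) (v + 1 + i) := by
    intro i
    rw [hrec i, add_smul]
    congr 2 <;> ring
  have hlast : T (u - (N : ℤ)) (v + 1 + N) = 0 := hT _ _ (by omega)
  simp only [Nat.cast_add, Nat.cast_one, Nat.cast_zero]
  rw [Finset.sum_congr rfl (fun i _ => key i), Finset.sum_add_distrib, h0, hlast]
  rw [smul_zero]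
  abel

section

variable {k V : Type*} [Field k] [CharZero k] [AddCommGroup V] [Module k V]

/-- First term of the Borcherds identity: `∑_{i≥0} C(p,i) (a_(r+i)b)_(p+q-i)c`. -/
noncomputable def B1 (Y : ℤ → V →ₗ[k] V →ₗ[k] V) (a b c : V) (p q r : ℤ) : V :=
  ∑ᶠ i : ℕ, ichoose p i • Y (p + q - i) (Y (r + i) a b) c

/-- Second term: `∑_{i≥0} (-1)^i C(r,i) a_(p+r-i)(b_(q+i)c)`. -/
noncomputable def B2 (Y : ℤ → V →ₗ[k] V →ₗ[k] V) (a b c : V) (p q r : ℤ) : V :=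
  ∑ᶠ i : ℕ, ((-1 : ℤ) ^ i * ichoose r i) • Y (p + r - i) a (Y (q + i) b c)

/-- Third term: `∑_{i≥0} (-1)^{r+i} C(r,i) b_(q+r-i)(a_(p+i)c)`. -/
noncomputable def B3 (Y : ℤ → V →ₗ[k] V →ₗ[k] V) (a b c : V) (p q r : ℤ) : V :=
  ∑ᶠ i : ℕ, (msign r * (-1 : ℤ) ^ i * ichoose r i) • Y (q + r - i) b (Y (p + i) a c)

lemma B1_rec (Y : ℤ → V →ₗ[k] V →ₗ[k] V)
    (htrunc : ∀ a b : V, ∃ n₀ : ℤ, ∀ n ≥ n₀, Y n a b = 0) (a b c : V) (p q r : ℤ) :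
    B1 Y a b c (p + 1) q r = B1 Y a b c p (q + 1) r + B1 Y a b c p q (r + 1) := by
  obtain ⟨n₀, h⟩ := htrunc a b
  have hT : ∀ m n : ℤ, n₀ ≤ n → Y m (Y n a b) c = 0 := by
    intro m n hn; rw [h n hn]; simp
  have := borcherds_abstract (fun m n => Y m (Y n a b) c) n₀ hT
    (fun i => ichoose (p + 1) i) (fun i => ichoose p i) (fun i => ichoose p i)
    (by simp [ichoose_zero]) (fun i => ichoose_succ p i) (p + q) r
  unfold B1
  calc ∑ᶠ i : ℕ, ichoose (p + 1) i • Y (p + 1 + q - i) (Y (r + i) a b) c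
      = ∑ᶠ i : ℕ, ichoose (p + 1) i • Y (p + q + 1 - i) (Y (r + i) a b) c := by
        exact finsum_congr fun i => by rw [show p + 1 + q - (i : ℤ) = p + q + 1 - i by ring]
    _ = (∑ᶠ i : ℕ, ichoose p i • Y (p + q + 1 - i) (Y (r + i) a b) c)
        + ∑ᶠ i : ℕ, ichoose p i • Y (p + q - i) (Y (r + 1 + i) a b) c := this
    _ = (∑ᶠ i : ℕ, ichoose p i • Y (p + (q + 1) - i) (Y (r + i) a b) c)
        + ∑ᶠ i : ℕ, ichoose p i • Y (p + q - i) (Y (r + 1 + i) a b) c := by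
        congr 1
        exact finsum_congr fun i => by rw [show p + q + 1 - (i : ℤ) = p + (q + 1) - i by ring]

lemma B2_rec (Y : ℤ → V →ₗ[k] V →ₗ[k] V)
    (htrunc : ∀ a b : V, ∃ n₀ : ℤ, ∀ n ≥ n₀, Y n a b = 0) (a b c : V) (p q r : ℤ) :
    B2 Y a b c (p + 1) q r = B2 Y a b c p (q + 1) r + B2 Y a b c p q (r + 1) := by
  obtain ⟨n₀, h⟩ := htrunc b c
  have hT : ∀ m n : ℤ, n₀ ≤ n → Y m a (Y n b c) = 0 := by
    intro m n hn; rw [h n hn]; simp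
  have := borcherds_abstract (fun m n => Y m a (Y n b c)) n₀ hT
    (fun i => (-1 : ℤ) ^ i * ichoose r i) (fun i => (-1 : ℤ) ^ i * ichoose (r + 1) i)
    (fun i => (-1 : ℤ) ^ i * ichoose r i)
    (by simp [ichoose_zero]) (fun i => by simp only [ichoose_succ]; ring) (p + r) q
  unfold B2
  calc ∑ᶠ i : ℕ, ((-1 : ℤ) ^ i * ichoose r i) • Y (p + 1 + r - i) a (Y (q + i) b c)
      = ∑ᶠ i : ℕ, ((-1 : ℤ) ^ i * ichoose r i) • Y (p + r + 1 - i) a (Y (q + i) b c) := by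
        exact finsum_congr fun i => by rw [show p + 1 + r - (i : ℤ) = p + r + 1 - i by ring]
    _ = (∑ᶠ i : ℕ, ((-1 : ℤ) ^ i * ichoose (r + 1) i) • Y (p + r + 1 - i) a (Y (q + i) b c))
        + ∑ᶠ i : ℕ, ((-1 : ℤ) ^ i * ichoose r i) • Y (p + r - i) a (Y (q + 1 + i) b c) := this
    _ = (∑ᶠ i : ℕ, ((-1 : ℤ) ^ i * ichoose r i) • Y (p + r - i) a (Y (q + 1 + i) b c))
        + ∑ᶠ i : ℕ, ((-1 : ℤ) ^ i * ichoose (r + 1) i) • Y (p + (r + 1) - i) a (Y (q + i) b c) := by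
        rw [add_comm]
        congr 1
        exact finsum_congr fun i => by rw [show p + r + 1 - (i : ℤ) = p + (r + 1) - i by ring]

lemma B3_rec (Y : ℤ → V →ₗ[k] V →ₗ[k] V)
    (htrunc : ∀ a b : V, ∃ n₀ : ℤ, ∀ n ≥ n₀, Y n a b = 0) (a b c : V) (p q r : ℤ) :
    B3 Y a b c (p + 1) q r = B3 Y a b c p (q + 1) r + B3 Y a b c p q (r + 1) := by
  obtain ⟨n₀, h⟩ := htrunc a c
  have hT : ∀ m n : ℤ, n₀ ≤ n → Y m b (Y n a c) = 0 := by
    intro m n hn; rw [h n hn]; simp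
  have habs := borcherds_abstract (fun m n => Y m b (Y n a c)) n₀ hT
    (fun i => msign (r + 1) * (-1 : ℤ) ^ i * ichoose (r + 1) i)
    (fun i => -(msign r * (-1 : ℤ) ^ i * ichoose r i))
    (fun i => msign r * (-1 : ℤ) ^ i * ichoose r i)
    (by simp [ichoose_zero, msign_succ])
    (fun i => by simp only [msign_succ, ichoose_succ]; ring) (q + r) p
  have hneg : ∑ᶠ i : ℕ, (-(msign r * (-1 : ℤ) ^ i * ichoose r i)) •
        (fun m n => Y m b (Y n a c)) (q + r + 1 - i) (p + i)
      = -∑ᶠ i : ℕ, (msign r * (-1 : ℤ) ^ i * ichoose r i) •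
        Y (q + r + 1 - i) b (Y (p + i) a c) := by
    rw [← finsum_neg_distrib]
    exact finsum_congr fun i => by rw [neg_smul]
  rw [hneg] at habs
  unfold B3
  have eL : ∑ᶠ i : ℕ, (msign (r + 1) * (-1 : ℤ) ^ i * ichoose (r + 1) i) •
        Y (q + (r + 1) - i) b (Y (p + i) a c)
      = ∑ᶠ i : ℕ, (msign (r + 1) * (-1 : ℤ) ^ i * ichoose (r + 1) i) •
        (fun m n => Y m b (Y n a c)) (q + r + 1 - i) (p + i) :=
    finsum_congr fun i => by rw [show q + (r + 1) - (i : ℤ) = q + r + 1 - i by ring]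
  have eM : ∑ᶠ i : ℕ, (msign r * (-1 : ℤ) ^ i * ichoose r i) •
        Y (q + 1 + r - i) b (Y (p + i) a c)
      = ∑ᶠ i : ℕ, (msign r * (-1 : ℤ) ^ i * ichoose r i) •
        Y (q + r + 1 - i) b (Y (p + i) a c) :=
    finsum_congr fun i => by rw [show q + 1 + r - (i : ℤ) = q + r + 1 - i by ring]
  have eR : ∑ᶠ i : ℕ, (msign r * (-1 : ℤ) ^ i * ichoose r i) •
        Y (q + r - i) b (Y (p + 1 + i) a c)
      = ∑ᶠ i : ℕ, (msign r * (-1 : ℤ) ^ i * ichoose r i) •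
        (fun m n => Y m b (Y n a c)) (q + r - i) (p + 1 + i) :=
    finsum_congr fun i => rfl
  rw [eM, eR]
  -- habs : LHS' = -(middle) + right ; goal: right-form = middle + LHS'
  have := habs
  rw [← eL] at this
  -- this : B3(p,q,r+1)-shape = -middle + B3(p+1,q,r)-shape
  rw [eq_neg_add_iff_add_eq] at this
  -- this : middle + B3(p,q,r+1)shape = B3(p+1,q,r)shape
  rw [← this]

/-- Each of the three terms of the Borcherds identity satisfies the recursion
`B(p+1,q,r) = B(p,q+1,r) + B(p,q,r+1)`; consequently, the Borcherds identity for
`r = 0` (commutator formula) and for `p = 0` (associativity formula) implies the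
Borcherds identity for all `p, q, r`. -/
theorem stmt19 (Y : ℤ → V →ₗ[k] V →ₗ[k] V)
    (htrunc : ∀ a b : V, ∃ n₀ : ℤ, ∀ n ≥ n₀, Y n a b = 0) (a b c : V) :
    ((∀ p q r : ℤ, B1 Y a b c (p + 1) q r = B1 Y a b c p (q + 1) r + B1 Y a b c p q (r + 1)) ∧
     (∀ p q r : ℤ, B2 Y a b c (p + 1) q r = B2 Y a b c p (q + 1) r + B2 Y a b c p q (r + 1)) ∧
     (∀ p q r : ℤ, B3 Y a b c (p + 1) q r = B3 Y a b c p (q + 1) r + B3 Y a b c p q (r + 1))) ∧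
    ((∀ p q : ℤ, B1 Y a b c p q 0 = B2 Y a b c p q 0 - B3 Y a b c p q 0) →
     (∀ q r : ℤ, B1 Y a b c 0 q r = B2 Y a b c 0 q r - B3 Y a b c 0 q r) →
     ∀ p q r : ℤ, B1 Y a b c p q r = B2 Y a b c p q r - B3 Y a b c p q r) := by
  have R1 := B1_rec Y htrunc a b c
  have R2 := B2_rec Y htrunc a b c
  have R3 := B3_rec Y htrunc a b c
  refine ⟨⟨R1, R2, R3⟩, ?_⟩
  intro hcomm hassoc
  let Q : ℤ → ℤ → Prop := fun p r =>
    ∀ q, B1 Y a b c p q r = B2 Y a b c p q r - B3 Y a b c p q r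
  have stepA : ∀ p r, Q p r → Q p (r + 1) → Q (p + 1) r := by
    intro p r h1 h2 q
    have e1 := R1 p q r
    rw [h1 (q + 1), h2 q] at e1
    rw [e1, R2 p q r, R3 p q r]
    abel
  have stepB : ∀ p r, Q (p + 1) r → Q p r → Q p (r + 1) := by
    intro p r h1 h2 q
    have f1 : B1 Y a b c p q (r + 1)
        = B1 Y a b c (p + 1) q r - B1 Y a b c p (q + 1) r := by rw [R1 p q r]; abel
    have f2 : B2 Y a b c p q (r + 1)
        = B2 Y a b c (p + 1) q r - B2 Y a b c p (q + 1) r := by rw [R2 p q r]; abel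
    have f3 : B3 Y a b c p q (r + 1)
        = B3 Y a b c (p + 1) q r - B3 Y a b c p (q + 1) r := by rw [R3 p q r]; abel
    rw [f1, f2, f3, h1 q, h2 (q + 1)]
    abel
  have stepC : ∀ p r, Q (p + 1) r → Q p (r + 1) → Q p r := by
    intro p r h1 h2 q
    have hq : q - 1 + 1 = q := by ring
    have e1 := R1 p (q - 1) r
    have e2 := R2 p (q - 1) r
    have e3 := R3 p (q - 1) r
    rw [hq] at e1 e2 e3
    have f1 : B1 Y a b c p q r
        = B1 Y a b c (p + 1) (q - 1) r - B1 Y a b c p (q - 1) (r + 1) := by rw [e1]; abel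
    rw [f1, h1 (q - 1), h2 (q - 1), e2, e3]
    abel
  have up_r : ∀ n : ℕ, ∀ p, Q p (n : ℤ) := by
    intro n
    induction n with
    | zero => intro p q; simpa using hcomm p q
    | succ n ih =>
      intro p
      have hc : ((n + 1 : ℕ) : ℤ) = (n : ℤ) + 1 := by push_cast; ring
      rw [hc]
      exact stepB p n (ih (p + 1)) (ih p)
  have up_rZ : ∀ r : ℤ, 0 ≤ r → ∀ p, Q p r := by
    intro r hr p
    obtain ⟨n, rfl⟩ := Int.eq_ofNat_of_zero_le hr
    exact up_r n p
  have up_p : ∀ n : ℕ, ∀ r, Q (n : ℤ) r := by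
    intro n
    induction n with
    | zero => intro r q; simpa using hassoc q r
    | succ n ih =>
      intro r
      have hc : ((n + 1 : ℕ) : ℤ) = (n : ℤ) + 1 := by push_cast; ring
      rw [hc]
      exact stepA n r (ih r) (ih (r + 1))
  have up_pZ : ∀ p : ℤ, 0 ≤ p → ∀ r, Q p r := by
    intro p hp r
    obtain ⟨n, rfl⟩ := Int.eq_ofNat_of_zero_le hp
    exact up_p n r
  have main : ∀ n : ℕ, ∀ p r : ℤ, -(p + r) ≤ (n : ℤ) → Q p r := by
    intro n
    induction n with
    | zero =>
      intro p r h
      rcases le_or_gt 0 r with h' | h'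
      · exact up_rZ r h' p
      · exact up_pZ p (by omega) r
    | succ n ih =>
      intro p r h
      rcases le_or_gt 0 r with h' | h'
      · exact up_rZ r h' p
      rcases le_or_gt 0 p with h'' | h''
      · exact up_pZ p h'' r
      · exact stepC p r (ih (p + 1) r (by push_cast at h ⊢; omega))
          (ih p (r + 1) (by push_cast at h ⊢; omega))
  intro p q r
  exact main (-(p + r)).toNat p r (by omega) q

end
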